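/- Tree unraveling invariance of MDL: let W = (S,R,π) be a frame and w ∈ S. Define the unraveling W^w = (S',R',π') where S' is the set of all finite sequences (s₀,…,s_n) with s₀ = w and (s_i,s_{i+1}) ∈ R for all i < n, where ((s₀,…,s_n),(s₀',…,s_m')) ∈ R' iff m = n+1 and s_i' = s_i for all i ≤ n, and where π'((s₀,…,s_n)) = π(s_n). Then for every MDL formula φ: W,{w} ⊨ φ if and only if W^w,{(w)} ⊨ φ. -/

import Mathlib

/-- Formulas of modal dependence logic over atomic propositions `AP`.
Negation occurs only in front of atoms (`natom`) and dependence atoms (`ndep`).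
`dep ps q` is the dependence atom dep(p₁,…,p_{n-1};p_n) with `ps` the list
p₁,…,p_{n-1} and `q = p_n`.  `or` is dependence disjunction ∨ and
`cor` is classical disjunction ⊘. -/
inductive MDL (AP : Type) : Type
  | top : MDL AP
  | bot : MDL AP
  | atom : AP → MDL AP
  | natom : AP → MDL AP
  | dep : List AP → AP → MDL AP
  | ndep : List AP → AP → MDL AP
  | and : MDL AP → MDL AP → MDL AP
  | or : MDL AP → MDL AP → MDL AP
  | cor : MDL AP → MDL AP → MDL AP
  | box : MDL AP → MDL AP
  | dia : MDL AP → MDL AP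

/-- A Kripke frame `W = (S, R, π)`. -/
structure Frame (AP : Type) where
  S : Type
  R : S → S → Prop
  pi : S → Set AP

/-- Team semantics of MDL: `sat W φ T` means `W, T ⊨ φ`. -/
def sat {AP : Type} (W : Frame AP) : MDL AP → Set W.S → Prop
  | .top, _ => True
  | .bot, T => T = ∅
  | .atom p, T => ∀ s ∈ T, p ∈ W.pi s
  | .natom p, T => ∀ s ∈ T, p ∉ W.pi s
  | .dep ps q, T => ∀ s₁ ∈ T, ∀ s₂ ∈ T,
      (∀ p ∈ ps, (p ∈ W.pi s₁ ↔ p ∈ W.pi s₂)) → (q ∈ W.pi s₁ ↔ q ∈ W.pi s₂)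
  | .ndep _ _, T => T = ∅
  | .and φ ψ, T => sat W φ T ∧ sat W ψ T
  | .or φ ψ, T => ∃ T₁ T₂, T = T₁ ∪ T₂ ∧ sat W φ T₁ ∧ sat W ψ T₂
  | .cor φ ψ, T => sat W φ T ∨ sat W ψ T
  | .box φ, T => sat W φ {s' | ∃ s ∈ T, W.R s s'}
  | .dia φ, T => ∃ T' : Set W.S, sat W φ T' ∧ ∀ s ∈ T, ∃ s' ∈ T', W.R s s'

/-- A formula is satisfiable iff some frame and nonempty team satisfy it. -/
def satisfiable {AP : Type} (φ : MDL AP) : Prop :=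
  ∃ (W : Frame AP) (T : Set W.S), T.Nonempty ∧ sat W φ T

/-- The tree unraveling of `W` at `w`: worlds are the finite R-paths
(s₀,…,sₙ) with s₀ = w (represented as lists), a path steps to its
one-step extensions, and a path is labeled by the label of its last world. -/
def Unravel {AP : Type} (W : Frame AP) (w : W.S) : Frame AP where
  S := {l : List W.S // l.head? = some w ∧ List.Chain' W.R l}
  R := fun l₁ l₂ => ∃ x : W.S, l₂.val = l₁.val ++ [x]
  pi := fun l =>
    match l.val.getLast? with
    | some s => W.pi s
    | none => ∅

/-- The root (w) of the unraveling. -/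
def unravelRoot {AP : Type} (W : Frame AP) (w : W.S) : (Unravel W w).S :=
  ⟨[w], by simp [List.Chain', List.isChain_singleton]⟩

/-- MDL is downward closed. -/
theorem sat_mono {AP : Type} (W : Frame AP) (φ : MDL AP) :
    ∀ T T' : Set W.S, T' ⊆ T → sat W φ T → sat W φ T' := by
  induction φ with
  | top => intro T T' h hs; trivial
  | bot => intro T T' h hs; subst hs; exact Set.subset_empty_iff.mp h
  | atom p => intro T T' h hs s hsT; exact hs s (h hsT)
  | natom p => intro T T' h hs s hsT; exact hs s (h hsT)
  | dep ps q => intro T T' h hs s₁ h₁ s₂ h₂; exact hs s₁ (h h₁) s₂ (h h₂)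
  | ndep ps q => intro T T' h hs; subst hs; exact Set.subset_empty_iff.mp h
  | and φ ψ ih₁ ih₂ =>
      intro T T' h hs; exact ⟨ih₁ T T' h hs.1, ih₂ T T' h hs.2⟩
  | or φ ψ ih₁ ih₂ =>
      intro T T' h hs
      obtain ⟨T₁, T₂, rfl, h₁, h₂⟩ := hs
      refine ⟨T' ∩ T₁, T' ∩ T₂, ?_, ih₁ T₁ _ Set.inter_subset_right h₁,
        ih₂ T₂ _ Set.inter_subset_right h₂⟩
      rw [← Set.inter_union_distrib_left]
      exact (Set.inter_eq_left.mpr h).symm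
  | cor φ ψ ih₁ ih₂ =>
      intro T T' h hs
      rcases hs with hs | hs
      · exact Or.inl (ih₁ T T' h hs)
      · exact Or.inr (ih₂ T T' h hs)
  | box φ ih =>
      intro T T' h hs
      refine ih _ _ ?_ hs
      rintro s' ⟨s, hs', hR⟩
      exact ⟨s, h hs', hR⟩
  | dia φ ih =>
      intro T T' h hs
      obtain ⟨U, hU, hall⟩ := hs
      exact ⟨U, hU, fun s hsT => hall s (h hsT)⟩

namespace UnravelAux

variable {AP : Type} (W : Frame AP) (w : W.S)

theorem path_ne_nil (l : (Unravel W w).S) : l.val ≠ [] := by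
  intro h
  have := l.prop.1
  rw [h] at this
  simp at this

/-- The last world on a path in the unraveling. -/
def lastOf (l : (Unravel W w).S) : W.S := l.val.getLast (path_ne_nil W w l)

theorem pi_eq (l : (Unravel W w).S) :
    (Unravel W w).pi l = W.pi (lastOf W w l) := by
  show (match l.val.getLast? with
    | some s => W.pi s
    | none => ∅) = _
  rw [List.getLast?_eq_getLast (path_ne_nil W w l)]
  rfl

theorem rel_iff (l l' : (Unravel W w).S) :
    (Unravel W w).R l l' ↔
      l'.val = l.val ++ [lastOf W w l'] ∧ W.R (lastOf W w l) (lastOf W w l') := by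
  constructor
  · rintro ⟨x, hx⟩
    have hxlast : lastOf W w l' = x := by
      simp [lastOf, hx]
    subst hxlast
    refine ⟨hx, ?_⟩
    have hc := l'.prop.2
    rw [hx] at hc
    simp only [List.Chain'] at hc
    rw [List.isChain_append] at hc
    have := hc.2.2 (lastOf W w l)
      (List.getLast?_eq_getLast (path_ne_nil W w l)) (lastOf W w l') rfl
    exact this
  · rintro ⟨h, _⟩
    exact ⟨lastOf W w l', h⟩

/-- Extend a path by one R-step. -/
def ext (l : (Unravel W w).S) (x : W.S) (h : W.R (lastOf W w l) x) :
    (Unravel W w).S :=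
  ⟨l.val ++ [x], by
    constructor
    · rw [List.head?_append_of_ne_nil _ (path_ne_nil W w l)]
      exact l.prop.1
    · simp only [List.Chain']
      rw [List.isChain_append]
      refine ⟨l.prop.2, List.isChain_singleton x, ?_⟩
      intro a ha b hb
      rw [List.getLast?_eq_getLast (path_ne_nil W w l)] at ha
      simp at hb
      cases ha; subst hb; exact h⟩

theorem lastOf_ext (l : (Unravel W w).S) (x : W.S) (h : W.R (lastOf W w l) x) :
    lastOf W w (ext W w l x h) = x := by
  simp [lastOf, ext]

theorem rel_ext (l : (Unravel W w).S) (x : W.S) (h : W.R (lastOf W w l) x) :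
    (Unravel W w).R l (ext W w l x h) :=
  ⟨x, rfl⟩

/-- Key lemma: satisfaction in the unraveling corresponds to satisfaction in
`W` on the image of the team under `lastOf`. -/
theorem sat_unravel (φ : MDL AP) : ∀ T' : Set (Unravel W w).S,
    sat (Unravel W w) φ T' ↔ sat W φ (lastOf W w '' T') := by
  induction φ with
  | top => intro T'; simp [sat]
  | bot => intro T'; simp [sat, Set.image_eq_empty]
  | atom p =>
      intro T'
      constructor
      · rintro h s ⟨l, hl, rfl⟩
        have := h l hl; rwa [pi_eq] at this
      · intro h l hl
        rw [pi_eq]; exact h _ ⟨l, hl, rfl⟩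
  | natom p =>
      intro T'
      constructor
      · rintro h s ⟨l, hl, rfl⟩
        have := h l hl; rwa [pi_eq] at this
      · intro h l hl
        rw [pi_eq]; exact h _ ⟨l, hl, rfl⟩
  | dep ps q =>
      intro T'
      constructor
      · rintro h s₁ ⟨l₁, hl₁, rfl⟩ s₂ ⟨l₂, hl₂, rfl⟩ hps
        have := h l₁ hl₁ l₂ hl₂ (by rw [pi_eq, pi_eq]; exact hps)
        rwa [pi_eq, pi_eq] at this
      · intro h l₁ hl₁ l₂ hl₂ hps
        rw [pi_eq, pi_eq]
        exact h _ ⟨l₁, hl₁, rfl⟩ _ ⟨l₂, hl₂, rfl⟩ (by rw [pi_eq, pi_eq] at hps; exact hps)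
  | ndep ps q => intro T'; simp [sat, Set.image_eq_empty]
  | and φ ψ ih₁ ih₂ =>
      intro T'
      exact and_congr (ih₁ T') (ih₂ T')
  | or φ ψ ih₁ ih₂ =>
      intro T'
      constructor
      · rintro ⟨T₁, T₂, rfl, h₁, h₂⟩
        exact ⟨_, _, Set.image_union _ _ _, (ih₁ T₁).mp h₁, (ih₂ T₂).mp h₂⟩
      · rintro ⟨U₁, U₂, hU, h₁, h₂⟩
        refine ⟨{l ∈ T' | lastOf W w l ∈ U₁}, {l ∈ T' | lastOf W w l ∈ U₂}, ?_, ?_, ?_⟩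
        · ext l
          simp only [Set.mem_union, Set.mem_setOf_eq]
          constructor
          · intro hl
            have : lastOf W w l ∈ U₁ ∪ U₂ := by
              rw [← hU]; exact ⟨l, hl, rfl⟩
            rcases this with h | h
            · exact Or.inl ⟨hl, h⟩
            · exact Or.inr ⟨hl, h⟩
          · rintro (⟨hl, _⟩ | ⟨hl, _⟩) <;> exact hl
        · rw [ih₁]
          refine sat_mono W φ U₁ _ ?_ h₁
          rintro s ⟨l, ⟨_, hl⟩, rfl⟩; exact hl
        · rw [ih₂]
          refine sat_mono W ψ U₂ _ ?_ h₂
          rintro s ⟨l, ⟨_, hl⟩, rfl⟩; exact hl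
  | cor φ ψ ih₁ ih₂ =>
      intro T'
      exact or_congr (ih₁ T') (ih₂ T')
  | box φ ih =>
      intro T'
      show sat (Unravel W w) φ _ ↔ sat W φ _
      rw [ih]
      have hset : lastOf W w '' {l' | ∃ l ∈ T', (Unravel W w).R l l'}
          = {s' | ∃ s ∈ lastOf W w '' T', W.R s s'} := by
        ext x
        constructor
        · rintro ⟨l', ⟨l, hl, hR⟩, rfl⟩
          exact ⟨lastOf W w l, ⟨l, hl, rfl⟩, ((rel_iff W w l l').mp hR).2⟩
        · rintro ⟨s, ⟨l, hl, rfl⟩, hR⟩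
          exact ⟨ext W w l x hR, ⟨l, hl, rel_ext W w l x hR⟩, lastOf_ext W w l x hR⟩
      rw [hset]
  | dia φ ih =>
      intro T'
      constructor
      · rintro ⟨U', hU', hall⟩
        refine ⟨lastOf W w '' U', (ih U').mp hU', ?_⟩
        rintro s ⟨l, hl, rfl⟩
        obtain ⟨l', hl', hR⟩ := hall l hl
        exact ⟨lastOf W w l', ⟨l', hl', rfl⟩, ((rel_iff W w l l').mp hR).2⟩
      · rintro ⟨U, hU, hall⟩
        refine ⟨{l' | ∃ l ∈ T', ∃ x, ∃ hx : W.R (lastOf W w l) x,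
          x ∈ U ∧ l' = ext W w l x hx}, ?_, ?_⟩
        · rw [ih]
          refine sat_mono W φ U _ ?_ hU
          rintro s ⟨l', ⟨l, _, x, hx, hxU, rfl⟩, rfl⟩
          rwa [lastOf_ext]
        · intro l hl
          obtain ⟨x, hxU, hR⟩ := hall (lastOf W w l) ⟨l, hl, rfl⟩
          exact ⟨ext W w l x hR, ⟨l, hl, x, hR, hxU, rfl⟩, rel_ext W w l x hR⟩

end UnravelAux

/-- tree unraveling invariance of MDL. -/
theorem unravel_invariance {AP : Type} (W : Frame AP) (w : W.S) (φ : MDL AP) :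
    sat W φ ({w} : Set W.S) ↔
      sat (Unravel W w) φ ({unravelRoot W w} : Set (Unravel W w).S) := by
  rw [UnravelAux.sat_unravel W w φ]
  have : UnravelAux.lastOf W w '' {unravelRoot W w} = {w} := by
    rw [Set.image_singleton]
    simp [UnravelAux.lastOf, unravelRoot]
  rw [this]
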